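/- Let log and log′ be two extensions of the canonical logarithm to K_0^× with values in K_0. There is a unique ring homomorphism δ : B_st → B_st with γ_{log′} ∘ δ = γ_{log}, and it is given by δ = exp(((log(x) - log′(x))/ν_K(x))·N) for any x ∈ K_0 \ 𝒪_{K_0}^×. -/

import Mathlib

open Function

/-- Let `log, log′ : K_0^× → K_0` be two extensions of the canonical
logarithm (so `log - log′` vanishes on units and factors through the valuation `ν`).
`B_st` is an affine line over `B_cris`, generated by the element `ℓ = log_st(p̃)`,
carries the `B_cris`-linear monodromy derivation `N` with `N(ℓ) = 1` which is locally
nilpotent, and the embeddings `γ_log, γ_log′ : B_st → B_dR` are the `B_cris`-algebra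
maps with `γ_log(ℓ) = log_dR([p̃]/p) + log(p)`, `γ_log′(ℓ) = log_dR([p̃]/p) + log′(p)`
(so that `γ_log′(ℓ) - γ_log(ℓ) = log′(p) - log(p)`), with `γ_log′` injective.
Then there is a unique ring homomorphism `δ : B_st → B_st` (of `B_cris`-algebras)
with `γ_log′ ∘ δ = γ_log`, and it is given by
`δ = exp( ((log x - log′ x)/ν(x)) · N )` for every `x ∈ K_0 \ 𝒪_{K_0}^×`. -/
theorem delta_log_log'
    (K0 Bcris Bst BdR : Type)
    [Field K0] [CommRing Bcris] [CommRing Bst] [CommRing BdR]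
    [Algebra ℚ Bst] [Algebra K0 Bcris] [Algebra Bcris Bst] [Algebra Bcris BdR]
    (ν : Additive K0ˣ →+ ℤ)
    (lg lg' : K0ˣ → K0)
    -- `log - log′` is proportional to the valuation (they agree on the units)
    (hprop : ∀ x y : K0ˣ, ((ν (Additive.ofMul y) : ℤ) : K0) * (lg x - lg' x) =
      ((ν (Additive.ofMul x) : ℤ) : K0) * (lg y - lg' y))
    (ℓ : Bst)
    -- `Spec B_st` is a 1-dimensional affine space over `Spec B_cris`, with
    -- coordinate `ℓ = log_st(p̃)`
    (huniv : ∀ (C : Type) [CommRing C] [Algebra Bcris C] (c : C),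
      ∃! f : Bst →ₐ[Bcris] C, f ℓ = c)
    -- the monodromy operator: a locally nilpotent `B_cris`-linear derivation with
    -- `N ℓ = 1`
    (N : Bst →ₗ[Bcris] Bst)
    (hNder : ∀ a b : Bst, N (a * b) = a * N b + b * N a)
    (hNℓ : N ℓ = 1)
    (hnil : ∀ b : Bst, ∃ k : ℕ, (⇑N)^[k] b = 0)
    (γ γ' : Bst →ₐ[Bcris] BdR)
    (hinj : Function.Injective γ')
    (up : K0ˣ) (hup : ν (Additive.ofMul up) = 1)
    (hγγ' : γ' ℓ - γ ℓ =
      algebraMap Bcris BdR (algebraMap K0 Bcris (lg' up - lg up))) :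
    ∃! δ : Bst →ₐ[Bcris] Bst,
      γ'.comp δ = γ ∧
      ∀ x : K0ˣ, ν (Additive.ofMul x) ≠ 0 →
        ∀ b : Bst, δ b = ∑ᶠ k : ℕ, ((k.factorial : ℚ)⁻¹) •
          ((algebraMap Bcris Bst (algebraMap K0 Bcris
              ((lg x - lg' x) / ((ν (Additive.ofMul x) : ℤ) : K0)))) ^ k *
            (⇑N)^[k] b) := by
  classical
  set a : Bst := algebraMap Bcris Bst (algebraMap K0 Bcris (lg up - lg' up)) with ha
  obtain ⟨δ, hδℓ, hδuniq⟩ := huniv Bst (ℓ + a)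
  -- basic facts about N
  have hN1 : N (1 : Bst) = 0 := by
    have h := hNder 1 1
    simp only [mul_one, one_mul] at h
    exact left_eq_add.mp h
  have hNalg : ∀ r : Bcris, N (algebraMap Bcris Bst r) = 0 := by
    intro r
    rw [Algebra.algebraMap_eq_smul_one, map_smul, hN1, smul_zero]
  have hiter_add : ∀ (k : ℕ) (x y : Bst),
      (⇑N)^[k] (x + y) = (⇑N)^[k] x + (⇑N)^[k] y := by
    intro k
    induction k with
    | zero => intro x y; simp
    | succ k ih =>
      intro x y
      simp only [Function.iterate_succ_apply, map_add, ih]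
  have hiter_zero : ∀ k : ℕ, (⇑N)^[k] (0 : Bst) = 0 :=
    fun k => Function.iterate_fixed (map_zero N) k
  have hiter_ge : ∀ (b : Bst) (k₀ : ℕ), (⇑N)^[k₀] b = 0 →
      ∀ k, k₀ ≤ k → (⇑N)^[k] b = 0 := by
    intro b k₀ h0 k hk
    rw [show k = (k - k₀) + k₀ from (Nat.sub_add_cancel hk).symm,
      Function.iterate_add_apply, h0, hiter_zero]
  have hiter_mul : ∀ (c : Bst), N c = 0 → ∀ (k : ℕ) (b : Bst),
      (⇑N)^[k] (c * b) = c * (⇑N)^[k] b := by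
    intro c hc k
    induction k with
    | zero => intro b; simp
    | succ k ih =>
      intro b
      rw [Function.iterate_succ_apply, Function.iterate_succ_apply,
        show N (c * b) = c * N b by rw [hNder, hc, mul_zero, add_zero], ih]
  set F : Bst → ℕ → Bst :=
    fun b k => ((k.factorial : ℚ)⁻¹) • (a ^ k * (⇑N)^[k] b) with hF
  have hFsupp : ∀ b : Bst, (Function.support (F b)).Finite := by
    intro b
    obtain ⟨k₀, hk₀⟩ := hnil b
    apply Set.Finite.subset (Set.finite_Iio k₀)
    intro k hk
    simp only [Set.mem_Iio]
    by_contra hlt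
    push_neg at hlt
    exact Function.mem_support.mp hk
      (by simp only [hF]; rw [hiter_ge b k₀ hk₀ k hlt, mul_zero, smul_zero])
  have hE_add : ∀ x y : Bst,
      ∑ᶠ k, F (x + y) k = (∑ᶠ k, F x k) + ∑ᶠ k, F y k := by
    intro x y
    rw [← finsum_add_distrib (hFsupp x) (hFsupp y)]
    apply finsum_congr
    intro k
    simp only [hF, hiter_add, mul_add, smul_add]
  have hE_alg : ∀ (r : Bcris) (x : Bst),
      ∑ᶠ k, F (algebraMap Bcris Bst r * x) k
        = algebraMap Bcris Bst r * ∑ᶠ k, F x k := by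
    intro r x
    rw [mul_finsum' (F x) _ (hFsupp x)]
    apply finsum_congr
    intro k
    simp only [hF]
    rw [hiter_mul _ (hNalg r) k x, mul_left_comm]
    exact (mul_smul_comm _ _ _).symm
  have hNpow : ∀ n : ℕ, N (ℓ ^ n) = (n : Bst) * ℓ ^ (n - 1) := by
    intro n
    induction n with
    | zero => simpa using hN1
    | succ n ih =>
      rw [pow_succ, hNder, hNℓ, mul_one, ih]
      cases n with
      | zero => simp
      | succ m =>
        simp only [Nat.succ_sub_one]
        push_cast
        ring
  have hiter_pow : ∀ (k n : ℕ),
      (⇑N)^[k] (ℓ ^ n) = (n.descFactorial k : Bst) * ℓ ^ (n - k) := by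
    intro k
    induction k with
    | zero => intro n; simp
    | succ k ih =>
      intro n
      have hc : N ((n : ℕ) : Bst) = 0 := by
        rw [← map_natCast (algebraMap Bcris Bst) n]; exact hNalg _
      have h1 : n * (n - 1).descFactorial k = n.descFactorial (k + 1) := by
        cases n with
        | zero => simp
        | succ m => rw [Nat.succ_descFactorial_succ, Nat.succ_sub_one]
      rw [Function.iterate_succ_apply, hNpow, hiter_mul _ hc, ih,
        Nat.sub_sub, Nat.add_comm 1 k, ← h1, Nat.cast_mul, mul_assoc]
  have hE_pow : ∀ n : ℕ, ∑ᶠ k, F (ℓ ^ n) k = (ℓ + a) ^ n := by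
    intro n
    have hsub : Function.support (F (ℓ ^ n)) ⊆ (Finset.range (n + 1) : Set ℕ) := by
      intro k hk
      simp only [Finset.coe_range, Set.mem_Iio]
      by_contra hlt
      push_neg at hlt
      have hd : n.descFactorial k = 0 :=
        Nat.descFactorial_eq_zero_iff_lt.mpr (by omega)
      exact Function.mem_support.mp hk
        (by simp only [hF]; rw [hiter_pow k n, hd]; simp)
    rw [finsum_eq_sum_of_support_subset _ hsub, add_comm ℓ a, add_pow]
    apply Finset.sum_congr rfl
    intro k _
    simp only [hF]
    rw [hiter_pow k n]
    have h2 : a ^ k * ((n.descFactorial k : Bst) * ℓ ^ (n - k))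
        = ((n.descFactorial k : ℕ) : ℚ) • (a ^ k * ℓ ^ (n - k)) := by
      rw [Nat.cast_smul_eq_nsmul, nsmul_eq_mul]; ring
    rw [h2, smul_smul]
    have h3 : (k.factorial : ℚ)⁻¹ * (n.descFactorial k : ℚ) = (n.choose k : ℚ) := by
      rw [Nat.descFactorial_eq_factorial_mul_choose]
      push_cast
      rw [← mul_assoc, inv_mul_cancel₀
        (Nat.cast_ne_zero.mpr k.factorial_ne_zero), one_mul]
    rw [h3, Nat.cast_smul_eq_nsmul, nsmul_eq_mul]
    ring
  obtain ⟨φ, hφ, -⟩ := huniv (Polynomial Bcris) Polynomial.X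
  have hsurj : ∀ b : Bst, (Polynomial.aeval ℓ) (φ b) = b := by
    obtain ⟨i, -, hiu⟩ := huniv Bst ℓ
    have e1 : ((Polynomial.aeval ℓ).comp φ : Bst →ₐ[Bcris] Bst)
        = AlgHom.id Bcris Bst := by
      rw [hiu ((Polynomial.aeval ℓ).comp φ) (by simp [hφ]),
        hiu (AlgHom.id Bcris Bst) (by simp)]
    intro b
    exact DFunLike.congr_fun e1 b
  have hδE : ∀ b : Bst, δ b = ∑ᶠ k, F b k := by
    intro b
    rw [← hsurj b]
    generalize φ b = p
    induction p using Polynomial.induction_on' with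
    | add p q hp hq => rw [map_add, map_add, hE_add, hp, hq]
    | monomial n r =>
      rw [Polynomial.aeval_monomial, map_mul, AlgHom.commutes, map_pow, hδℓ,
        hE_alg, hE_pow]
  have hcomp : γ'.comp δ = γ := by
    obtain ⟨g, -, hgu⟩ := huniv BdR (γ ℓ)
    have h1 : (γ'.comp δ) ℓ = γ ℓ := by
      rw [AlgHom.comp_apply, hδℓ, map_add, ha, AlgHom.commutes]
      simp only [map_sub] at hγγ' ⊢
      linear_combination hγγ'
    rw [hgu _ h1, hgu γ rfl]
  refine ⟨δ, ⟨hcomp, ?_⟩, ?_⟩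
  · intro x hx b
    rcases subsingleton_or_nontrivial Bst with h | h
    · exact Subsingleton.elim _ _
    · have hchar : CharZero Bst :=
        charZero_of_injective_algebraMap (algebraMap ℚ Bst).injective
      have hν : ((ν (Additive.ofMul x) : ℤ) : K0) ≠ 0 := by
        intro h0
        have h1 := congrArg (fun t => algebraMap Bcris Bst (algebraMap K0 Bcris t)) h0
        simp only [map_zero, map_intCast] at h1
        exact (Int.cast_ne_zero.mpr hx) h1
      have ht : (lg x - lg' x) / ((ν (Additive.ofMul x) : ℤ) : K0)
          = lg up - lg' up := by
        rw [div_eq_iff hν]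
        have h := hprop x up
        rw [hup] at h
        push_cast at h
        linear_combination h
      rw [ht, hδE b]
  · rintro δ' ⟨hc', -⟩
    apply hδuniq
    apply hinj
    rw [← AlgHom.comp_apply, hc', map_add, ha, AlgHom.commutes]
    simp only [map_sub] at hγγ' ⊢
    linear_combination -hγγ'
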